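/- Let d ≥ 1, let B̄ and S^{d−1} denote the closed unit ball and the unit sphere of ℝ^d. Let g : S^{d−1} → ℝ be continuous and let h_g : B̄ → ℝ be its convex envelope, h_g(x) = sup { a(x) : a : ℝ^d → ℝ affine and a(ℓ) ≤ g(ℓ) for all ℓ ∈ S^{d−1} }. Let l : ℝ^d → ℝ be affine with l(x) ≤ h_g(x) for all x ∈ B̄. Then { x ∈ B̄ : h_g(x) = l(x) } = convexHull { ℓ ∈ S^{d−1} : g(ℓ) = l(ℓ) }. In particular, every contact set of the convex envelope with one of its supporting affine functions is the convex hull of points of the sphere. -/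

import Mathlib

open scoped RealInnerProductSpace

private lemma sum_extend_aux {α β M : Type*} [Fintype α] [Fintype β] [AddCommMonoid M]
    {j : α → β} (hj : Function.Injective j) (f : α → M) :
    ∑ i, Function.extend j f (0 : β → M) i = ∑ a, f a := by
  classical
  have h1 : ∑ i ∈ Finset.univ.map ⟨j, hj⟩, Function.extend j f (0 : β → M) i = ∑ a, f a := by
    rw [Finset.sum_map]
    exact Finset.sum_congr rfl fun a _ => hj.extend_apply f (0 : β → M) a
  rw [← h1]
  refine (Finset.sum_subset (Finset.subset_univ _) fun b _ hb => ?_).symm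
  have hnb : ¬∃ a, j a = b := by simpa [Finset.mem_map] using hb
  rw [Function.extend_apply' f (0 : β → M) b hnb]
  rfl

private lemma isCompact_convexHull_cpt {d : ℕ} {s : Set (EuclideanSpace ℝ (Fin d))}
    (hs : IsCompact s) : IsCompact (convexHull ℝ s) := by
  classical
  rcases s.eq_empty_or_nonempty with rfl | ⟨e, he⟩
  · simp
  set n := d + 1 with hn
  set F : (Fin n → ℝ) × (Fin n → EuclideanSpace ℝ (Fin d)) → EuclideanSpace ℝ (Fin d) :=
    fun p => ∑ i, p.1 i • p.2 i with hFdef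
  have hFc : Continuous F := by
    apply continuous_finset_sum
    intro i _
    exact ((continuous_apply i).comp continuous_fst).smul
      ((continuous_apply i).comp continuous_snd)
  have hK : IsCompact ((stdSimplex ℝ (Fin n)) ×ˢ (Set.univ.pi fun _ : Fin n => s)) :=
    (isCompact_stdSimplex (𝕜 := ℝ) (ι := Fin n)).prod (isCompact_univ_pi fun _ => hs)
  have himg : convexHull ℝ s
      = F '' ((stdSimplex ℝ (Fin n)) ×ˢ (Set.univ.pi fun _ : Fin n => s)) := by
    apply Set.Subset.antisymm
    · intro x hx
      obtain ⟨ι, hfin, z, w, hzs, hai, hw0, hw1, hsum⟩ :=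
        eq_pos_convex_span_of_mem_convexHull hx
      letI := hfin
      have hcard : Fintype.card ι ≤ n := by
        have h1 := hai.card_le_finrank_succ
        have h2 : Module.finrank ℝ (vectorSpan ℝ (Set.range z)) ≤ d := by
          have h3 := Submodule.finrank_le (vectorSpan ℝ (Set.range z))
          simpa [finrank_euclideanSpace_fin] using h3
        omega
      obtain ⟨j⟩ : Nonempty (ι ↪ Fin n) := by
        apply Function.Embedding.nonempty_of_card_le
        simpa using hcard
      refine ⟨(Function.extend (⇑j) w (0 : Fin n → ℝ), Function.extend (⇑j) z fun _ => e),
        ⟨⟨?_, ?_⟩, ?_⟩, ?_⟩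
      · intro i
        show (0:ℝ) ≤ Function.extend (⇑j) w (0 : Fin n → ℝ) i
        rcases em (∃ a, j a = i) with ⟨a, rfl⟩ | hni
        · rw [j.injective.extend_apply]
          exact (hw0 a).le
        · rw [Function.extend_apply' w (0 : Fin n → ℝ) i hni]
          exact le_refl _
      · show ∑ i, Function.extend (⇑j) w (0 : Fin n → ℝ) i = 1
        rw [sum_extend_aux j.injective w]
        exact hw1
      · intro i _
        show Function.extend (⇑j) z (fun _ => e) i ∈ s
        rcases em (∃ a, j a = i) with ⟨a, rfl⟩ | hni
        · rw [j.injective.extend_apply]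
          exact hzs (Set.mem_range_self a)
        · rw [Function.extend_apply' z _ i hni]
          exact he
      · have hpt : ∀ i : Fin n, Function.extend (⇑j) w (0 : Fin n → ℝ) i •
              Function.extend (⇑j) z (fun _ => e) i
            = Function.extend (⇑j) (fun a => w a • z a)
                (0 : Fin n → EuclideanSpace ℝ (Fin d)) i := by
          intro i
          rcases em (∃ a, j a = i) with ⟨a, rfl⟩ | hni
          · rw [j.injective.extend_apply, j.injective.extend_apply, j.injective.extend_apply]
          · rw [Function.extend_apply' w (0 : Fin n → ℝ) i hni,
              Function.extend_apply' (fun a => w a • z a)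
                (0 : Fin n → EuclideanSpace ℝ (Fin d)) i hni,
              Function.extend_apply' z (fun _ => e) i hni]
            simp
        show ∑ i, Function.extend (⇑j) w (0 : Fin n → ℝ) i •
            Function.extend (⇑j) z (fun _ => e) i = x
        rw [Finset.sum_congr rfl fun i _ => hpt i, sum_extend_aux j.injective]
        exact hsum
    · rintro x ⟨⟨w, p⟩, ⟨hw, hp⟩, rfl⟩
      exact (convex_convexHull ℝ s).sum_mem (fun i _ => hw.1 i) hw.2
        (fun i _ => subset_convexHull ℝ s (hp i (Set.mem_univ i)))
  rw [himg]
  exact hK.image hFc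

theorem stmt2 (d : ℕ) (hd : 1 ≤ d) (g : EuclideanSpace ℝ (Fin d) → ℝ)
    (hgcont : ContinuousOn g (Metric.sphere (0 : EuclideanSpace ℝ (Fin d)) 1))
    (h_g : EuclideanSpace ℝ (Fin d) → ℝ)
    (henv : ∀ x ∈ Metric.closedBall (0 : EuclideanSpace ℝ (Fin d)) 1,
        h_g x = sSup {y : ℝ | ∃ v : EuclideanSpace ℝ (Fin d), ∃ β : ℝ,
          (∀ ℓ ∈ Metric.sphere (0 : EuclideanSpace ℝ (Fin d)) 1, ⟪v, ℓ⟫ + β ≤ g ℓ) ∧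
          y = ⟪v, x⟫ + β})
    (v₀ : EuclideanSpace ℝ (Fin d)) (β₀ : ℝ)
    (hl : ∀ x ∈ Metric.closedBall (0 : EuclideanSpace ℝ (Fin d)) 1, ⟪v₀, x⟫ + β₀ ≤ h_g x) :
    {x ∈ Metric.closedBall (0 : EuclideanSpace ℝ (Fin d)) 1 | h_g x = ⟪v₀, x⟫ + β₀}
      = convexHull ℝ
          {ℓ ∈ Metric.sphere (0 : EuclideanSpace ℝ (Fin d)) 1 | g ℓ = ⟪v₀, ℓ⟫ + β₀} := by
  classical
  haveI : NeZero d := ⟨by omega⟩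
  set S : Set (EuclideanSpace ℝ (Fin d)) := Metric.sphere (0 : EuclideanSpace ℝ (Fin d)) 1 with hS
  set B : Set (EuclideanSpace ℝ (Fin d)) := Metric.closedBall (0 : EuclideanSpace ℝ (Fin d)) 1
    with hB
  set A : EuclideanSpace ℝ (Fin d) → Set ℝ := fun x => {y : ℝ | ∃ v : EuclideanSpace ℝ (Fin d),
      ∃ β : ℝ, (∀ ℓ ∈ S, ⟪v, ℓ⟫ + β ≤ g ℓ) ∧ y = ⟪v, x⟫ + β} with hA
  have henv' : ∀ x ∈ B, h_g x = sSup (A x) := henv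
  obtain ⟨ℓ₀, hℓ₀⟩ : S.Nonempty := NormedSpace.sphere_nonempty.mpr zero_le_one
  obtain ⟨ℓM, hℓM, hgmax'⟩ := (isCompact_sphere (0 : EuclideanSpace ℝ (Fin d)) 1).exists_isMaxOn
    ⟨ℓ₀, hℓ₀⟩ hgcont
  obtain ⟨ℓm, hℓm, hgmin'⟩ := (isCompact_sphere (0 : EuclideanSpace ℝ (Fin d)) 1).exists_isMinOn
    ⟨ℓ₀, hℓ₀⟩ hgcont
  have hgmax : ∀ ℓ ∈ S, g ℓ ≤ g ℓM := fun ℓ hℓ => hgmax' hℓ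
  have hgmin : ∀ ℓ ∈ S, g ℓm ≤ g ℓ := fun ℓ hℓ => hgmin' hℓ
  have hAne : ∀ x : EuclideanSpace ℝ (Fin d), (A x).Nonempty := by
    intro x
    exact ⟨g ℓm, 0, g ℓm, fun ℓ hℓ => by
      simpa [inner_zero_left] using hgmin ℓ hℓ, by simp [inner_zero_left]⟩
  have hAbdd : ∀ x ∈ B, ∀ y ∈ A x, y ≤ g ℓM := by
    rintro x hx y ⟨v, β, hvβ, rfl⟩
    by_cases hv : v = 0
    · subst hv
      have h1 := hvβ ℓ₀ hℓ₀
      have h2 := hgmax ℓ₀ hℓ₀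
      simp only [inner_zero_left, zero_add] at h1 ⊢
      linarith
    · have hvn : (0:ℝ) < ‖v‖ := norm_pos_iff.mpr hv
      have huS : ‖v‖⁻¹ • v ∈ S := by
        rw [hS, mem_sphere_zero_iff_norm, norm_smul, norm_inv, norm_norm]
        field_simp
      have hvu : ⟪v, ‖v‖⁻¹ • v⟫ = ‖v‖ := by
        rw [real_inner_smul_right, real_inner_self_eq_norm_sq]
        field_simp
      have hvx : ⟪v, x⟫ ≤ ‖v‖ := by
        have h1 := real_inner_le_norm v x
        have h2 : ‖x‖ ≤ 1 := mem_closedBall_zero_iff.mp hx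
        nlinarith
      have h3 := hvβ _ huS
      have h4 := hgmax _ huS
      rw [hvu] at h3
      linarith
  have hle : ∀ x ∈ B, ∀ v : EuclideanSpace ℝ (Fin d), ∀ β : ℝ,
      (∀ ℓ ∈ S, ⟪v, ℓ⟫ + β ≤ g ℓ) → ⟪v, x⟫ + β ≤ h_g x := by
    intro x hx v β hvβ
    rw [henv' x hx]
    exact le_csSup ⟨g ℓM, fun y hy => hAbdd x hx y hy⟩ ⟨v, β, hvβ, rfl⟩
  have hub : ∀ x ∈ B, ∀ c : ℝ, (∀ y ∈ A x, y ≤ c) → h_g x ≤ c := by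
    intro x hx c hc
    rw [henv' x hx]
    exact csSup_le (hAne x) hc
  have hSB : S ⊆ B := Metric.sphere_subset_closedBall
  have hgle : ∀ ℓ ∈ S, h_g ℓ ≤ g ℓ := by
    intro ℓ hℓ
    refine hub ℓ (hSB hℓ) _ ?_
    rintro y ⟨v, β, hvβ, rfl⟩
    exact hvβ ℓ hℓ
  have hlg : ∀ ℓ ∈ S, ⟪v₀, ℓ⟫ + β₀ ≤ g ℓ := fun ℓ hℓ =>
    le_trans (hl ℓ (hSB hℓ)) (hgle ℓ hℓ)
  set T : Set (EuclideanSpace ℝ (Fin d)) := {ℓ ∈ S | g ℓ = ⟪v₀, ℓ⟫ + β₀} with hT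
  set C : Set (EuclideanSpace ℝ (Fin d)) := {x ∈ B | h_g x = ⟪v₀, x⟫ + β₀} with hC
  show C = convexHull ℝ T
  apply Set.Subset.antisymm
  · -- hard direction
    intro x hx
    obtain ⟨hxB, hxc⟩ := hx
    by_contra hxh
    -- T is compact
    haveI : CompactSpace S := isCompact_iff_compactSpace.mp (isCompact_sphere _ 1)
    have hTc : IsCompact T := by
      have heq : T = Subtype.val ''
          {y : S | g ↑y = ⟪v₀, (y : EuclideanSpace ℝ (Fin d))⟫ + β₀} := by
        ext ℓ
        simp only [hT, Set.mem_setOf_eq, Set.mem_image, Subtype.exists, exists_and_left,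
          exists_prop, exists_eq_right_right]
        tauto
      rw [heq]
      refine IsCompact.image ?_ continuous_subtype_val
      have hcl : IsClosed {y : S | g ↑y = ⟪v₀, (y : EuclideanSpace ℝ (Fin d))⟫ + β₀} := by
        have hc : Continuous fun y : S =>
            g ↑y - (⟪v₀, (y : EuclideanSpace ℝ (Fin d))⟫ + β₀) := by
          apply Continuous.sub
          · exact hgcont.restrict
          · exact (Continuous.inner continuous_const continuous_subtype_val).add
              continuous_const
        have heq2 : {y : S | g ↑y = ⟪v₀, (y : EuclideanSpace ℝ (Fin d))⟫ + β₀}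
            = (fun y : S => g ↑y - (⟪v₀, (y : EuclideanSpace ℝ (Fin d))⟫ + β₀)) ⁻¹' {0} := by
          ext y
          simp [sub_eq_zero]
        rw [heq2]
        exact isClosed_singleton.preimage hc
      exact hcl.isCompact
    have hhullc : IsCompact (convexHull ℝ T) := isCompact_convexHull_cpt hTc
    obtain ⟨f, u, hfu, hux⟩ := geometric_hahn_banach_closed_point
      (convex_convexHull ℝ T) hhullc.isClosed hxh
    have hwf : ∀ y : EuclideanSpace ℝ (Fin d),
        ⟪(InnerProductSpace.toDual ℝ (EuclideanSpace ℝ (Fin d))).symm f, y⟫ = f y :=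
      fun y => InnerProductSpace.toDual_symm_apply
    set w : EuclideanSpace ℝ (Fin d) :=
      (InnerProductSpace.toDual ℝ (EuclideanSpace ℝ (Fin d))).symm f with hwdef
    have hφ0 : ∀ ℓ ∈ S, 0 ≤ g ℓ - (⟪v₀, ℓ⟫ + β₀) := fun ℓ hℓ => by linarith [hlg ℓ hℓ]
    set K : Set (EuclideanSpace ℝ (Fin d)) := S ∩ f ⁻¹' Set.Ici u with hK
    have hKc : IsCompact K := (isCompact_sphere _ 1).inter_right
      (isClosed_Ici.preimage f.continuous)
    have hKpos : ∀ ℓ ∈ K, 0 < g ℓ - (⟪v₀, ℓ⟫ + β₀) := by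
      rintro ℓ ⟨hℓS, hℓu⟩
      have hℓT : ℓ ∉ T := by
        intro hℓT
        have := hfu ℓ (subset_convexHull ℝ T hℓT)
        exact absurd hℓu (by simpa using not_le.mpr this)
      have hne : g ℓ ≠ ⟪v₀, ℓ⟫ + β₀ := by
        intro hcon
        exact hℓT ⟨hℓS, hcon⟩
      have := hφ0 ℓ hℓS
      rcases lt_or_eq_of_le this with h | h
      · exact h
      · exact absurd (by linarith : g ℓ = ⟪v₀, ℓ⟫ + β₀) hne
    obtain ⟨ε, hε, hεP⟩ : ∃ ε > (0:ℝ), ∀ ℓ ∈ K, ε * (f ℓ - u) ≤ g ℓ - (⟪v₀, ℓ⟫ + β₀) := by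
      rcases K.eq_empty_or_nonempty with hKe | hKne
      · exact ⟨1, one_pos, by simp [hKe]⟩
      · have hcont : ContinuousOn (fun ℓ => g ℓ - (⟪v₀, ℓ⟫ + β₀)) K := by
          apply ContinuousOn.sub
          · exact hgcont.mono (by rw [hK]; exact Set.inter_subset_left)
          · exact Continuous.continuousOn
              ((Continuous.inner continuous_const continuous_id).add continuous_const)
        obtain ⟨ℓ₁, hℓ₁, hmin₁⟩ := hKc.exists_isMinOn hKne hcont
        have hm : 0 < g ℓ₁ - (⟪v₀, ℓ₁⟫ + β₀) := hKpos ℓ₁ hℓ₁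
        refine ⟨(g ℓ₁ - (⟪v₀, ℓ₁⟫ + β₀)) / (‖f‖ + |u| + 1), by positivity, ?_⟩
        intro ℓ hℓ
        have hfb : f ℓ - u ≤ ‖f‖ + |u| + 1 := by
          have hn : ‖ℓ‖ = 1 := mem_sphere_zero_iff_norm.mp hℓ.1
          have h1 : f ℓ ≤ ‖f‖ := by
            calc f ℓ ≤ |f ℓ| := le_abs_self _
              _ = ‖f ℓ‖ := (Real.norm_eq_abs _).symm
              _ ≤ ‖f‖ * ‖ℓ‖ := f.le_opNorm ℓ
              _ = ‖f‖ := by rw [hn, mul_one]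
          have h2 : -u ≤ |u| := neg_le_abs u
          linarith
        have hX : (0:ℝ) < ‖f‖ + |u| + 1 := by positivity
        calc (g ℓ₁ - (⟪v₀, ℓ₁⟫ + β₀)) / (‖f‖ + |u| + 1) * (f ℓ - u)
            ≤ (g ℓ₁ - (⟪v₀, ℓ₁⟫ + β₀)) / (‖f‖ + |u| + 1) * (‖f‖ + |u| + 1) := by
              apply mul_le_mul_of_nonneg_left hfb
              positivity
          _ = g ℓ₁ - (⟪v₀, ℓ₁⟫ + β₀) := div_mul_cancel₀ _ (ne_of_gt hX)
          _ ≤ g ℓ - (⟪v₀, ℓ⟫ + β₀) := hmin₁ hℓ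
    have hadm : ∀ ℓ ∈ S, ⟪v₀ + ε • w, ℓ⟫ + (β₀ - ε * u) ≤ g ℓ := by
      intro ℓ hℓ
      have hi : ⟪v₀ + ε • w, ℓ⟫ = ⟪v₀, ℓ⟫ + ε * f ℓ := by
        rw [inner_add_left, real_inner_smul_left, hwf]
      rw [hi]
      by_cases hcase : u ≤ f ℓ
      · have h5 := hεP ℓ ⟨hℓ, hcase⟩
        linarith
      · have h1 : ε * (f ℓ - u) ≤ 0 :=
          mul_nonpos_of_nonneg_of_nonpos hε.le (by linarith [not_le.mp hcase])
        have h2 := hφ0 ℓ hℓ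
        linarith
    have hfin := hle x hxB (v₀ + ε • w) (β₀ - ε * u) hadm
    have hi : ⟪v₀ + ε • w, x⟫ = ⟪v₀, x⟫ + ε * f x := by
      rw [inner_add_left, real_inner_smul_left, hwf]
    rw [hi, hxc] at hfin
    nlinarith [hux, hε]
  · -- easy direction
    apply convexHull_min
    · intro ℓ hℓ
      obtain ⟨hℓS, hℓg⟩ := hℓ
      refine ⟨hSB hℓS, le_antisymm ?_ (hl ℓ (hSB hℓS))⟩
      rw [← hℓg]
      exact hgle ℓ hℓS
    · intro x hx y hy a b ha hb hab
      obtain ⟨hxB, hxc⟩ := hx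
      obtain ⟨hyB, hyc⟩ := hy
      have hz : a • x + b • y ∈ B :=
        convex_closedBall (0 : EuclideanSpace ℝ (Fin d)) 1 hxB hyB ha hb hab
      refine ⟨hz, le_antisymm ?_ (hl _ hz)⟩
      refine hub _ hz _ ?_
      rintro q ⟨v, β, hvβ, rfl⟩
      have hx' : ⟪v, x⟫ + β ≤ ⟪v₀, x⟫ + β₀ := by
        have h6 := hle x hxB v β hvβ
        rw [hxc] at h6
        exact h6
      have hy' : ⟪v, y⟫ + β ≤ ⟪v₀, y⟫ + β₀ := by
        have h6 := hle y hyB v β hvβ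
        rw [hyc] at h6
        exact h6
      have e1 : ⟪v, a • x + b • y⟫ = a * ⟪v, x⟫ + b * ⟪v, y⟫ := by
        rw [inner_add_right, real_inner_smul_right, real_inner_smul_right]
      have e2 : ⟪v₀, a • x + b • y⟫ = a * ⟪v₀, x⟫ + b * ⟪v₀, y⟫ := by
        rw [inner_add_right, real_inner_smul_right, real_inner_smul_right]
      rw [e1, e2]
      have hβ : β = a * β + b * β := by rw [← add_mul, hab, one_mul]
      have hβ₀ : β₀ = a * β₀ + b * β₀ := by rw [← add_mul, hab, one_mul]
      linarith [add_le_add (mul_le_mul_of_nonneg_left hx' ha)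
        (mul_le_mul_of_nonneg_left hy' hb), hβ, hβ₀]
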